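/- For every 312-avoiding permutation π of length n, the number of occurrences of the vincular pattern [23]-1 equals (Σ_{i ∈ Lmax(π)} (π_i - i)) - n + lmax(π), where Lmax(π) is the set of left-to-right maximum positions and lmax(π) = |Lmax(π)|. -/

import Mathlib

open scoped Classical

namespace ThesisStmt
noncomputable section

variable {n : ℕ}

/-- π avoids the classical pattern 231: no i<j<k with π k < π i < π j. -/
def Avoids231 (π : Equiv.Perm (Fin n)) : Prop :=
  ¬ ∃ i j k : Fin n, i < j ∧ j < k ∧ π k < π i ∧ π i < π j

/-- π avoids 312: no i<j<k with π j < π k < π i. -/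
def Avoids312 (π : Equiv.Perm (Fin n)) : Prop :=
  ¬ ∃ i j k : Fin n, i < j ∧ j < k ∧ π j < π k ∧ π k < π i

/-- π avoids 321: no i<j<k with π k < π j < π i. -/
def Avoids321 (π : Equiv.Perm (Fin n)) : Prop :=
  ¬ ∃ i j k : Fin n, i < j ∧ j < k ∧ π k < π j ∧ π j < π i

/-- A nonempty set of positions whose values, read in increasing position order,
form consecutive integers decreasing by 1 (values strictly decrease along positions
and the value set is an integer interval). -/
def IsDecSeq (π : Equiv.Perm (Fin n)) (I : Finset (Fin n)) : Prop :=
  I.Nonempty ∧ (∀ i ∈ I, ∀ j ∈ I, i < j → π j < π i) ∧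
    ∀ v : Fin n, (∃ a ∈ I, π a ≤ v) → (∃ b ∈ I, v ≤ π b) → ∃ c ∈ I, π c = v

/-- An inverse descent run: a maximal `IsDecSeq`. -/
def IsIDR (π : Equiv.Perm (Fin n)) (I : Finset (Fin n)) : Prop :=
  IsDecSeq π I ∧ ∀ J : Finset (Fin n), IsDecSeq π J → I ⊆ J → J = I

/-- `I 0, I 1, ..., I (k-1)` is the family of inverse descent runs of π,
partitioning the positions, ordered by decreasing maximum value. -/
def IDRFamily (π : Equiv.Perm (Fin n)) {k : ℕ} (I : Fin k → Finset (Fin n)) : Prop :=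
  (∀ j, IsIDR π (I j)) ∧ (∀ x : Fin n, ∃! j, x ∈ I j) ∧
    ∀ u v : Fin k, u < v → ∃ a ∈ I u, ∀ b ∈ I v, π b < π a

/-- position i is a left-to-right maximum. -/
def IsLmax (π : Equiv.Perm (Fin n)) (i : Fin n) : Prop := ∀ j, j < i → π j < π i

/-- position i is a right-to-left maximum. -/
def IsRmax (π : Equiv.Perm (Fin n)) (i : Fin n) : Prop := ∀ j, i < j → π j < π i

/-- position i is a right-to-left minimum. -/
def IsRmin (π : Equiv.Perm (Fin n)) (i : Fin n) : Prop := ∀ j, i < j → π i < π j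

def LmaxSet (π : Equiv.Perm (Fin n)) : Finset (Fin n) := Finset.univ.filter (IsLmax π)

def rmaxCount (π : Equiv.Perm (Fin n)) : ℕ := (Finset.univ.filter (IsRmax π)).card

def rminCount (π : Equiv.Perm (Fin n)) : ℕ := (Finset.univ.filter (IsRmin π)).card

/-- number of inversions (i, j) with first coordinate i. -/
def invAt (π : Equiv.Perm (Fin n)) (i : Fin n) : ℕ :=
  (Finset.univ.filter (fun j : Fin n => i < j ∧ π j < π i)).card

/-- total number of inversions. -/
def inv (π : Equiv.Perm (Fin n)) : ℕ :=
  (Finset.univ.filter (fun p : Fin n × Fin n => p.1 < p.2 ∧ π p.2 < π p.1)).card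

def IsAscent (π : Equiv.Perm (Fin n)) (i : Fin n) : Prop :=
  ∃ h : (i : ℕ) + 1 < n, π i < π ⟨(i : ℕ) + 1, h⟩

def IsDescent (π : Equiv.Perm (Fin n)) (i : Fin n) : Prop :=
  ∃ h : (i : ℕ) + 1 < n, π ⟨(i : ℕ) + 1, h⟩ < π i

/-- number of descents, which is also the number of occurrences of [21]. -/
def des (π : Equiv.Perm (Fin n)) : ℕ := (Finset.univ.filter (IsDescent π)).card

/-- occurrences of the vincular pattern 2-[13]: (x, y, y+1), x < y, π y < π x < π (y+1). -/
def occ2_13 (π : Equiv.Perm (Fin n)) : ℕ :=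
  (Finset.univ.filter (fun p : Fin n × Fin n =>
    ∃ h : (p.2 : ℕ) + 1 < n, p.1 < p.2 ∧
      π p.2 < π p.1 ∧ π p.1 < π ⟨(p.2 : ℕ) + 1, h⟩)).card

/-- occurrences of [23]-1: (x, x+1, y), x+1 < y, π y < π x < π (x+1). -/
def occ23_1 (π : Equiv.Perm (Fin n)) : ℕ :=
  (Finset.univ.filter (fun p : Fin n × Fin n =>
    ∃ h : (p.1 : ℕ) + 1 < n, (⟨(p.1 : ℕ) + 1, h⟩ : Fin n) < p.2 ∧
      π p.2 < π p.1 ∧ π p.1 < π ⟨(p.1 : ℕ) + 1, h⟩)).card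

/-- occurrences of [13]-2: (x, x+1, y), x+1 < y, π x < π y < π (x+1). -/
def occ13_2 (π : Equiv.Perm (Fin n)) : ℕ :=
  (Finset.univ.filter (fun p : Fin n × Fin n =>
    ∃ h : (p.1 : ℕ) + 1 < n, (⟨(p.1 : ℕ) + 1, h⟩ : Fin n) < p.2 ∧
      π p.1 < π p.2 ∧ π p.2 < π ⟨(p.1 : ℕ) + 1, h⟩)).card

/-- occurrences of [21]-3: (x, x+1, y), x+1 < y, π (x+1) < π x < π y. -/
def occ21_3 (π : Equiv.Perm (Fin n)) : ℕ :=
  (Finset.univ.filter (fun p : Fin n × Fin n =>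
    ∃ h : (p.1 : ℕ) + 1 < n, (⟨(p.1 : ℕ) + 1, h⟩ : Fin n) < p.2 ∧
      π ⟨(p.1 : ℕ) + 1, h⟩ < π p.1 ∧ π p.1 < π p.2)).card

/-- occurrences of [32]-1: (x, x+1, y), x+1 < y, π y < π (x+1) < π x. -/
def occ32_1 (π : Equiv.Perm (Fin n)) : ℕ :=
  (Finset.univ.filter (fun p : Fin n × Fin n =>
    ∃ h : (p.1 : ℕ) + 1 < n, (⟨(p.1 : ℕ) + 1, h⟩ : Fin n) < p.2 ∧
      π p.2 < π ⟨(p.1 : ℕ) + 1, h⟩ ∧ π ⟨(p.1 : ℕ) + 1, h⟩ < π p.1)).card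

/-- occurrences of [31]-2: (x, x+1, y), x+1 < y, π (x+1) < π y < π x. -/
def occ31_2 (π : Equiv.Perm (Fin n)) : ℕ :=
  (Finset.univ.filter (fun p : Fin n × Fin n =>
    ∃ h : (p.1 : ℕ) + 1 < n, (⟨(p.1 : ℕ) + 1, h⟩ : Fin n) < p.2 ∧
      π ⟨(p.1 : ℕ) + 1, h⟩ < π p.2 ∧ π p.2 < π p.1)).card

/-- occurrences of 3-[21]: (y, x, x+1), y < x, π (x+1) < π x < π y. -/
def occ3_21 (π : Equiv.Perm (Fin n)) : ℕ :=
  (Finset.univ.filter (fun p : Fin n × Fin n =>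
    ∃ h : (p.2 : ℕ) + 1 < n, p.1 < p.2 ∧
      π ⟨(p.2 : ℕ) + 1, h⟩ < π p.2 ∧ π p.2 < π p.1)).card

/-- bast = [13]2 + [21]3 + [32]1 + [21]. -/
def bast (π : Equiv.Perm (Fin n)) : ℕ := occ13_2 π + occ21_3 π + occ32_1 π + des π

/-- foze = [21]3 + 3[21] + [13]2 + [21]. -/
def foze (π : Equiv.Perm (Fin n)) : ℕ := occ21_3 π + occ3_21 π + occ13_2 π + des π

/-- foze'' = [23]1 + [31]2 + [31]2 + [21]. -/
def fozePP (π : Equiv.Perm (Fin n)) : ℕ := occ23_1 π + occ31_2 π + occ31_2 π + des π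

/-! ### Auxiliary definitions and lemmas for stmt8 -/

/-- predecessor position (truncated at 0). -/
def predF (x : Fin n) : Fin n := ⟨(x : ℕ) - 1, lt_of_le_of_lt (Nat.sub_le _ _) x.isLt⟩

/-- successor position (identity if at the end). -/
def sucF (x : Fin n) : Fin n :=
  if h : (x : ℕ) + 1 < n then ⟨(x : ℕ) + 1, h⟩ else x

/-- the prefix up to any position contains a left-to-right maximum dominating it. -/
lemma exists_lmax_ge (π : Equiv.Perm (Fin n)) (j : Fin n) :
    ∃ m : Fin n, IsLmax π m ∧ m ≤ j ∧ π j ≤ π m := by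
  obtain ⟨m, hm, hmax⟩ := Finset.exists_max_image (Finset.univ.filter (· ≤ j))
    (fun t => π t) ⟨j, by simp⟩
  simp only [Finset.mem_filter, Finset.mem_univ, true_and] at hm
  refine ⟨m, ?_, hm, hmax j (by simp)⟩
  intro t ht
  have h1 : π t ≤ π m := hmax t (by
    simp only [Finset.mem_filter, Finset.mem_univ, true_and]
    exact le_trans (le_of_lt ht) hm)
  exact lt_of_le_of_ne h1 (fun he => absurd (π.injective he) (ne_of_lt ht))

/-- in a 312-avoiding permutation, the top of an ascent is a left-to-right maximum. -/
lemma lmax_of_ascent (π : Equiv.Perm (Fin n)) (h312 : Avoids312 π) {x x' : Fin n}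
    (hx : (x : ℕ) + 1 = (x' : ℕ)) (ha : π x < π x') : IsLmax π x' := by
  intro j hj
  have hj' : (j : ℕ) ≤ (x : ℕ) := by
    have := hj; rw [Fin.lt_def] at this; omega
  rcases eq_or_lt_of_le hj' with hje | hjl
  · have : j = x := Fin.ext hje
    rw [this]; exact ha
  · by_contra hc
    have hne : π x' ≠ π j := fun he =>
      absurd (π.injective he) (by intro he'; rw [he'] at hj; exact lt_irrefl _ hj)
    have hlt : π x' < π j := lt_of_le_of_ne (le_of_not_gt hc) hne
    exact h312 ⟨j, x, x', by rw [Fin.lt_def]; exact hjl, by rw [Fin.lt_def]; omega, ha, hlt⟩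

lemma card_filter_lt_pi (π : Equiv.Perm (Fin n)) (i : Fin n) :
    (Finset.univ.filter (fun j => π j < π i)).card = (π i : ℕ) := by
  have himg : Finset.univ.filter (fun j => π j < π i) = (Finset.Iio (π i)).image π.symm := by
    ext j
    simp only [Finset.mem_filter, Finset.mem_univ, true_and, Finset.mem_image, Finset.mem_Iio]
    constructor
    · intro hlt; exact ⟨π j, hlt, π.symm_apply_apply j⟩
    · rintro ⟨v, hv, rfl⟩; simpa using hv
  rw [himg, Finset.card_image_of_injective _ π.symm.injective, Fin.card_Iio]

/-- value minus position at a left-to-right maximum counts inversions there. -/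
lemma lmax_invAt (π : Equiv.Perm (Fin n)) {i : Fin n} (hl : IsLmax π i) :
    (π i : ℕ) = (i : ℕ) + invAt π i := by
  classical
  have hsplit : Finset.univ.filter (fun j => π j < π i)
      = Finset.univ.filter (fun j => j < i)
        ∪ Finset.univ.filter (fun j : Fin n => i < j ∧ π j < π i) := by
    ext j
    simp only [Finset.mem_filter, Finset.mem_univ, true_and, Finset.mem_union]
    constructor
    · intro hlt
      rcases lt_trichotomy j i with hji | hji | hji
      · exact Or.inl hji
      · exact absurd hlt (by rw [hji]; exact lt_irrefl _)
      · exact Or.inr ⟨hji, hlt⟩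
    · rintro (hji | ⟨_, hlt⟩)
      · exact hl j hji
      · exact hlt
  have hdisj : Disjoint (Finset.univ.filter (fun j => j < i))
      (Finset.univ.filter (fun j : Fin n => i < j ∧ π j < π i)) := by
    rw [Finset.disjoint_left]
    intro j hj1 hj2
    simp only [Finset.mem_filter, Finset.mem_univ, true_and] at hj1 hj2
    exact absurd (lt_trans hj1 hj2.1) (lt_irrefl _)
  have hlt_card : (Finset.univ.filter (fun j => j < i)).card = (i : ℕ) := by
    have : Finset.univ.filter (fun j => j < i) = Finset.Iio i := by
      ext j; simp
    rw [this, Fin.card_Iio]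
  have := card_filter_lt_pi π i
  rw [hsplit, Finset.card_union_of_disjoint hdisj, hlt_card] at this
  unfold invAt
  omega

/-- the central counting identity. -/
lemma main_count (π : Equiv.Perm (Fin n)) (h312 : Avoids312 π) :
    ∑ i ∈ LmaxSet π, invAt π i
      = occ23_1 π + (Finset.univ.filter (fun y : Fin n => ¬ IsLmax π y)).card := by
  classical
  set T : Finset (Fin n × Fin n) :=
    Finset.univ.filter (fun p : Fin n × Fin n => IsLmax π p.1 ∧ p.1 < p.2 ∧ π p.2 < π p.1)
    with hTdef
  have memT : ∀ p : Fin n × Fin n, p ∈ T ↔ IsLmax π p.1 ∧ p.1 < p.2 ∧ π p.2 < π p.1 := by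
    intro p; simp [hTdef]
  set P : Fin n × Fin n → Prop := fun p => (p.1 : ℕ) ≠ 0 ∧ π p.2 < π (predF p.1) with hPdef
  -- Step 1 : T.card = ∑ invAt over Lmax
  have step1 : T.card = ∑ i ∈ LmaxSet π, invAt π i := by
    rw [Finset.card_eq_sum_card_fiberwise (f := Prod.fst) (t := LmaxSet π)
      (fun p hp => by
        simp only [LmaxSet, Finset.mem_coe, Finset.mem_filter, Finset.mem_univ, true_and]
        exact ((memT p).1 hp).1)]
    refine Finset.sum_congr rfl (fun i hi => ?_)
    have hil : IsLmax π i := by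
      simpa [LmaxSet] using hi
    unfold invAt
    refine Finset.card_bij' (fun p _ => p.2) (fun y _ => (i, y)) ?_ ?_ ?_ ?_
    · intro p hp
      simp only [Finset.mem_filter] at hp
      obtain ⟨hpT, hfst⟩ := hp
      obtain ⟨_, hlt, hval⟩ := (memT p).1 hpT
      simp only [Finset.mem_filter, Finset.mem_univ, true_and]
      rw [← hfst]
      exact ⟨hlt, hval⟩
    · intro y hy
      simp only [Finset.mem_filter, Finset.mem_univ, true_and] at hy
      exact Finset.mem_filter.2 ⟨(memT (i, y)).2 ⟨hil, hy.1, hy.2⟩, rfl⟩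
    · intro p hp
      simp only [Finset.mem_filter] at hp
      exact Prod.ext hp.2.symm rfl
    · intro y _; rfl
  -- Step 3 : occ23_1 = card of T ∩ P
  have step3 : occ23_1 π = (T.filter P).card := by
    unfold occ23_1
    refine Finset.card_bij (fun p _ => (sucF p.1, p.2)) ?_ ?_ ?_
    · intro p hp
      simp only [Finset.mem_filter, Finset.mem_univ, true_and] at hp
      obtain ⟨h1, hlt, hv1, hv2⟩ := hp
      have hsuc : sucF p.1 = ⟨(p.1 : ℕ) + 1, h1⟩ := dif_pos h1
      rw [Finset.mem_filter]
      constructor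
      · rw [memT]
        refine ⟨?_, ?_, ?_⟩
        · rw [hsuc]
          exact lmax_of_ascent π h312 (x := p.1) rfl hv2
        · rw [hsuc]; exact hlt
        · rw [hsuc]; exact lt_trans hv1 hv2
      · refine ⟨?_, ?_⟩
        · rw [hsuc]; simp
        · have : predF (sucF p.1) = p.1 := by
            rw [hsuc]; exact Fin.ext (by simp [predF])
          rw [this]; exact hv1
    · intro a ha b hb heq
      simp only [Finset.mem_filter, Finset.mem_univ, true_and] at ha hb
      obtain ⟨ha1, _⟩ := ha
      obtain ⟨hb1, _⟩ := hb
      injection heq with h1 h2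
      unfold sucF at h1
      rw [dif_pos ha1, dif_pos hb1] at h1
      have : (a.1 : ℕ) = (b.1 : ℕ) := by
        have := congrArg Fin.val h1; simpa using this
      exact Prod.ext (Fin.ext this) h2
    · intro q hq
      rw [Finset.mem_filter] at hq
      obtain ⟨hqT, hq0, hqv⟩ := hq
      obtain ⟨hlmax, hlt, hval⟩ := (memT q).1 hqT
      have hx1 : ((predF q.1 : Fin n) : ℕ) + 1 = (q.1 : ℕ) := by
        simp only [predF]; omega
      have hxn : ((predF q.1 : Fin n) : ℕ) + 1 < n := by
        rw [hx1]; exact q.1.isLt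
      have hsuc : sucF (predF q.1) = q.1 := by
        rw [sucF, dif_pos hxn]; exact Fin.ext (by simpa using hx1)
      refine ⟨(predF q.1, q.2), ?_, ?_⟩
      · simp only [Finset.mem_filter, Finset.mem_univ, true_and]
        refine ⟨hxn, ?_, hqv, ?_⟩
        · have : (⟨((predF q.1 : Fin n) : ℕ) + 1, hxn⟩ : Fin n) = q.1 := Fin.ext hx1
          rw [this]; exact hlt
        · have : (⟨((predF q.1 : Fin n) : ℕ) + 1, hxn⟩ : Fin n) = q.1 := Fin.ext hx1
          rw [this]
          exact hlmax _ (by rw [Fin.lt_def]; omega)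
      · dsimp only
        rw [hsuc]
    -- Step 4 : card of T minus P = number of non-lmax positions
  have step4 : (T.filter (fun p => ¬ P p)).card
      = (Finset.univ.filter (fun y : Fin n => ¬ IsLmax π y)).card := by
    have key : ∀ p q : Fin n × Fin n, p ∈ T.filter (fun r => ¬ P r) →
        q ∈ T.filter (fun r => ¬ P r) → p.2 = q.2 → p.1 < q.1 → False := by
      intro p q hp hq h2 hlt
      rw [Finset.mem_filter] at hp hq
      obtain ⟨hpT, hpP⟩ := hp
      obtain ⟨hqT, hqP⟩ := hq
      obtain ⟨hpl, hplt, hpv⟩ := (memT p).1 hpT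
      obtain ⟨hql, hqlt, hqv⟩ := (memT q).1 hqT
      have hq0 : (q.1 : ℕ) ≠ 0 := by
        have := hlt; rw [Fin.lt_def] at this; omega
      have hvle : π (predF q.1) ≤ π q.2 := by
        by_contra hcon
        exact hqP ⟨hq0, lt_of_not_ge hcon⟩
      -- p.1 < predF q.1
      have hple : (p.1 : ℕ) ≤ ((predF q.1 : Fin n) : ℕ) := by
        simp only [predF]
        have := hlt; rw [Fin.lt_def] at this; omega
      have hpne : (p.1 : ℕ) ≠ ((predF q.1 : Fin n) : ℕ) := by
        intro he
        have : p.1 = predF q.1 := Fin.ext he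
        rw [← this] at hvle
        rw [h2] at hpv
        exact absurd (lt_of_le_of_lt hvle hpv) (lt_irrefl _)
      have hppred : p.1 < predF q.1 := by rw [Fin.lt_def]; omega
      have hpredq2 : predF q.1 < q.2 := by
        rw [Fin.lt_def]
        have := hqlt; rw [Fin.lt_def] at this
        simp only [predF]; omega
      have hvne : π (predF q.1) ≠ π q.2 := fun he =>
        absurd (π.injective he) (ne_of_lt hpredq2)
      have hvlt : π (predF q.1) < π q.2 := lt_of_le_of_ne hvle hvne
      rw [h2] at hpv
      exact h312 ⟨p.1, predF q.1, q.2, hppred, hpredq2, hvlt, hpv⟩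
    refine Finset.card_bij (fun p _ => p.2) ?_ ?_ ?_
    · intro p hp
      rw [Finset.mem_filter] at hp
      obtain ⟨hpl, hplt, hpv⟩ := (memT p).1 hp.1
      simp only [Finset.mem_filter, Finset.mem_univ, true_and]
      intro hcon
      exact absurd (hcon p.1 hplt) (not_lt_of_gt hpv)
    · intro a ha b hb heq
      rcases lt_trichotomy a.1 b.1 with hab | hab | hab
      · exact absurd (key a b ha hb heq hab) (fun x => x)
      · exact Prod.ext hab heq
      · exact absurd (key b a hb ha heq.symm hab) (fun x => x)
    · intro y hy
      simp only [Finset.mem_filter, Finset.mem_univ, true_and] at hy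
      -- there is an earlier position with a larger value
      have hexj : ∃ j : Fin n, j < y ∧ π y < π j := by
        rw [IsLmax] at hy
        push_neg at hy
        obtain ⟨j, hj1, hj2⟩ := hy
        refine ⟨j, hj1, lt_of_le_of_ne hj2 ?_⟩
        intro he
        exact absurd (π.injective he) (ne_of_gt hj1)
      obtain ⟨j, hjy, hjv⟩ := hexj
      set L' : Finset (Fin n) := (LmaxSet π).filter (fun i => π y < π i) with hL'
      have hL'mem : ∀ i : Fin n, i ∈ L' ↔ IsLmax π i ∧ π y < π i := by
        intro i; simp [hL', LmaxSet]
      have hL'ne : L'.Nonempty := by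
        obtain ⟨m, hml, _, hmge⟩ := exists_lmax_ge π j
        exact ⟨m, (hL'mem m).2 ⟨hml, lt_of_lt_of_le hjv hmge⟩⟩
      obtain ⟨i, hiL, hmin⟩ := Finset.exists_min_image L' (fun i => π i) hL'ne
      obtain ⟨hil, hiv⟩ := (hL'mem i).1 hiL
      -- i < y
      have hiy : i < y := by
        rcases lt_trichotomy i y with hc | hc | hc
        · exact hc
        · exact absurd hiv (by rw [hc]; exact lt_irrefl _)
        · exfalso
          obtain ⟨m, hml, hmle, hmge⟩ := exists_lmax_ge π j
          have hm_in : m ∈ L' := (hL'mem m).2 ⟨hml, lt_of_lt_of_le hjv hmge⟩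
          have hm_lt_i : m < i := lt_of_le_of_lt hmle (lt_trans hjy hc)
          exact absurd (hmin m hm_in) (not_le_of_gt (hil m hm_lt_i))
      refine ⟨(i, y), ?_, rfl⟩
      rw [Finset.mem_filter]
      constructor
      · exact (memT (i, y)).2 ⟨hil, hiy, hiv⟩
      · rintro ⟨hi0, hipred⟩
        have hi0' : (i : ℕ) ≠ 0 := hi0
        have hipred' : π y < π (predF i) := hipred
        obtain ⟨m', hm'l, hm'le, hm'ge⟩ := exists_lmax_ge π (predF i)
        have hm'_in : m' ∈ L' := (hL'mem m').2 ⟨hm'l, lt_of_lt_of_le hipred' hm'ge⟩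
        have hm'_lt_i : m' < i := lt_of_le_of_lt hm'le (by
          rw [Fin.lt_def]; simp only [predF]; omega)
        exact absurd (hmin m' hm'_in) (not_le_of_gt (hil m' hm'_lt_i))
  -- assemble
  have hsplitT : (T.filter P).card + (T.filter (fun p => ¬ P p)).card = T.card :=
    Finset.card_filter_add_card_filter_not P
  omega

/-- for 312-avoiding π of length n, the number of [23]-1 occurrences
equals (Σ_{i ∈ Lmax(π)} (π_i - i)) - n + lmax(π). -/
theorem stmt8 {n : ℕ} (π : Equiv.Perm (Fin n)) (h : Avoids312 π) :
    (occ23_1 π : ℤ) =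
      (∑ i ∈ LmaxSet π, ((π i : ℤ) - (i : ℤ))) - (n : ℤ) + (LmaxSet π).card := by
  classical
  have hsum : ∑ i ∈ LmaxSet π, ((π i : ℤ) - (i : ℤ))
      = ((∑ i ∈ LmaxSet π, invAt π i : ℕ) : ℤ) := by
    push_cast
    refine Finset.sum_congr rfl (fun i hi => ?_)
    have hil : IsLmax π i := by simpa [LmaxSet] using hi
    have := lmax_invAt π hil
    have h1 : ((π i : Fin n) : ℤ) = (((π i : Fin n) : ℕ) : ℤ) := rfl
    have h2 : ((i : Fin n) : ℤ) = (((i : Fin n) : ℕ) : ℤ) := rfl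
    rw [h1, h2]
    omega
  have hm := main_count π h
  have hN : (LmaxSet π).card
      + (Finset.univ.filter (fun y : Fin n => ¬ IsLmax π y)).card = n := by
    have := Finset.card_filter_add_card_filter_not (s := (Finset.univ : Finset (Fin n)))
      (IsLmax π)
    simpa [LmaxSet] using this
  rw [hsum]
  omega

end
end ThesisStmt
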